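/- arXiv:1512.08083 — 2 statements merged into one kernel-verified Lean document; each statement's English description precedes it below -/
import Mathlib

section
/- Reset monotonicity for the circulate reset: let B > m > 0 and let L = (z₁, z₂, z₃) ∈ ℝ³ with each |z_i| ≤ B, and let the reset map send the state (t, t_p, L) to (t, t, (z₂, z₃, t−t_p)), where m < t − t_p ≤ B. Then for any ζ > 0 and any φ_{z,1}, φ_{z,2}, φ_{z,3} > 0 with φ_p · m ≥ ζ + √(12 B²) · (φ_{z,1} + φ_{z,2} + φ_{z,3}), the vector φ = (0, φ_p, φ_{z,1}, φ_{z,2}, φ_{z,3}) satisfies φ · (x⁺ − x⁻) ≥ ζ, where x⁻ = (t, t_p, z₁, z₂, z₃) and x⁺ = (t, t, z₂, z₃, t − t_p). -/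
/-- **Reset monotonicity for the circulate reset (TCFI discriminator).**
Let `0 < m < B`, `L = (z₁, z₂, z₃)` with `|zᵢ| ≤ B`, and let the reset send
`x⁻ = (t, t_p, z₁, z₂, z₃)` to `x⁺ = (t, t, z₂, z₃, t − t_p)`, where
`m < t − t_p ≤ B`. Then for any `ζ > 0` and positive `φ_{z,i}` with
`φ_p * m ≥ ζ + √(12 B²) * (φ_{z,1} + φ_{z,2} + φ_{z,3})`, the vector
`φ = (0, φ_p, φ_{z,1}, φ_{z,2}, φ_{z,3})` satisfies `φ · (x⁺ − x⁻) ≥ ζ`. -/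
theorem tcfi_reset_monotonicity
    (m B : ℝ) (hm : 0 < m) (hmB : m < B)
    (t tp z₁ z₂ z₃ : ℝ)
    (hz₁ : |z₁| ≤ B) (hz₂ : |z₂| ≤ B) (hz₃ : |z₃| ≤ B)
    (hlow : m < t - tp) (hhigh : t - tp ≤ B)
    (ζ φp φz₁ φz₂ φz₃ : ℝ) (hζ : 0 < ζ)
    (hφz₁ : 0 < φz₁) (hφz₂ : 0 < φz₂) (hφz₃ : 0 < φz₃)
    (hφp : φp * m ≥ ζ + Real.sqrt (12 * B ^ 2) * (φz₁ + φz₂ + φz₃)) :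
    0 * (t - t) + φp * (t - tp) + φz₁ * (z₂ - z₁) + φz₂ * (z₃ - z₂) +
      φz₃ * ((t - tp) - z₃) ≥ ζ := by
  have hB : 0 < B := hm.trans hmB
  have hsq : (2 * B) ^ 2 ≤ 12 * B ^ 2 := by nlinarith
  have hsqrt : 2 * B ≤ Real.sqrt (12 * B ^ 2) := by
    have hs := Real.sq_sqrt (by positivity : (0:ℝ) ≤ 12 * B ^ 2)
    have hn := Real.sqrt_nonneg (12 * B ^ 2)
    nlinarith
  have h1 := abs_le.mp hz₁
  have h2 := abs_le.mp hz₂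
  have h3 := abs_le.mp hz₃
  have hφp0 : 0 < φp := by
    have hnn : 0 ≤ Real.sqrt (12 * B ^ 2) := Real.sqrt_nonneg _
    nlinarith
  nlinarith [mul_le_mul_of_nonneg_right hsqrt hφz₁.le,
    mul_le_mul_of_nonneg_right hsqrt hφz₂.le,
    mul_le_mul_of_nonneg_right hsqrt hφz₃.le]
end

section
/- Mixed reset monotonicity for mixed simultaneous jumps: let I be a finite index set partitioned as K_= ∪ K_≠ ∪ K₀. For each i ∈ K_≠ suppose φⁱ · (x^{i,+} − x^{i,−}) ≥ εⁱ ‖x^{i,+} − x^{i,−}‖ with εⁱ > 0; for each i ∈ K_= suppose φⁱ · (x^{i,+} − x^{i,−}) ≥ ζⁱ > 0 and ‖x^{i,+} − x^{i,−}‖ ≤ Bⁱ with Bⁱ > 0; for each i ∈ K₀ suppose x^{i,+} = x^{i,−}. Define ε = min( min_{i∈K_≠} εⁱ, min_{i∈K_=} ζⁱ/Bⁱ ) (over the nonempty parts). Then φ · (x⁺ − x⁻) ≥ ε · ‖x⁺ − x⁻‖, where φ, x⁺, x⁻ are the concatenations. -/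
/-- **Mixed reset monotonicity for mixed simultaneous jumps (Case 2 of
the parallel composition theorem for STORMED systems).** The finite index
set `I` is partitioned into `Keq ∪ Kneq ∪ K0`. Blocks in `Kneq` jumped
across modes (`⟪φⁱ, dⁱ⟫ ≥ εⁱ ‖dⁱ‖`), blocks in `Keq` jumped within a mode
(`⟪φⁱ, dⁱ⟫ ≥ ζⁱ` and `‖dⁱ‖ ≤ Bⁱ`), and blocks in `K0` did not move. With
`ε = min(min_{Kneq} εⁱ, min_{Keq} ζⁱ/Bⁱ)` taken over the nonempty parts,
the concatenated vectors (in the `L²` product space) satisfy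
`⟪φ, x⁺ − x⁻⟫ ≥ ε ‖x⁺ − x⁻‖`. -/
theorem parallel_reset_monotonicity_mixed
    (I : Type) [Fintype I] [DecidableEq I] (n : I → ℕ)
    (φ xminus xplus : PiLp 2 (fun i => EuclideanSpace ℝ (Fin (n i))))
    (Kneq Keq K0 : Finset I)
    (hd1 : Disjoint Kneq Keq) (hd2 : Disjoint Kneq K0) (hd3 : Disjoint Keq K0)
    (hcover : Kneq ∪ Keq ∪ K0 = Finset.univ)
    (εf ζ B : I → ℝ)
    (hne : (Kneq ∪ Keq).Nonempty)
    (hKneq : ∀ i ∈ Kneq, 0 < εf i ∧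
      (inner ℝ (φ i) (xplus i - xminus i) : ℝ) ≥ εf i * ‖xplus i - xminus i‖)
    (hKeq : ∀ i ∈ Keq, 0 < ζ i ∧ 0 < B i ∧ ‖xplus i - xminus i‖ ≤ B i ∧
      (inner ℝ (φ i) (xplus i - xminus i) : ℝ) ≥ ζ i)
    (hK0 : ∀ i ∈ K0, xplus i = xminus i) :
    (inner ℝ φ (xplus - xminus) : ℝ) ≥
      ((Kneq ∪ Keq).inf' hne fun i => if i ∈ Kneq then εf i else ζ i / B i) *
        ‖xplus - xminus‖ := by
  set d := xplus - xminus with hd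
  set ε := (Kneq ∪ Keq).inf' hne fun i => if i ∈ Kneq then εf i else ζ i / B i
    with hεdef
  have hdi : ∀ i, d i = xplus i - xminus i := fun i => rfl
  -- ε is positive
  have hεpos : 0 < ε := by
    rw [hεdef, Finset.lt_inf'_iff]
    intro i hi
    by_cases h : i ∈ Kneq
    · simpa [h] using (hKneq i h).1
    · have hi' : i ∈ Keq := by
        rcases Finset.mem_union.1 hi with h' | h'
        · exact absurd h' h
        · exact h'
      obtain ⟨hζ, hB, _, _⟩ := hKeq i hi'
      simp [h, div_pos hζ hB]
  -- ε ≤ per-block constant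
  have hεle : ∀ i ∈ Kneq ∪ Keq, ε ≤ if i ∈ Kneq then εf i else ζ i / B i :=
    fun i hi => Finset.inf'_le _ hi
  -- blockwise lower bound on inner products
  have hblock : ∀ i, (inner ℝ (φ i) (d i) : ℝ) ≥ ε * ‖d i‖ := by
    intro i
    have hi : i ∈ Kneq ∪ Keq ∪ K0 := hcover ▸ Finset.mem_univ i
    rcases Finset.mem_union.1 hi with hi | hi
    · rcases Finset.mem_union.1 hi with h1 | h1
      · obtain ⟨hp, hin⟩ := hKneq i h1
        have : ε ≤ εf i := by simpa [h1] using hεle i (Finset.mem_union_left _ h1)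
        calc ε * ‖d i‖ ≤ εf i * ‖d i‖ :=
              mul_le_mul_of_nonneg_right this (norm_nonneg _)
          _ ≤ _ := by rw [hdi]; exact hin
      · obtain ⟨hζ, hB, hle, hin⟩ := hKeq i h1
        have hnot : i ∉ Kneq := fun h => (Finset.disjoint_left.1 hd1) h h1
        have h1' : ε ≤ ζ i / B i := by
          simpa [hnot] using hεle i (Finset.mem_union_right _ h1)
        calc ε * ‖d i‖ ≤ (ζ i / B i) * ‖d i‖ :=
              mul_le_mul_of_nonneg_right h1' (norm_nonneg _)
          _ ≤ (ζ i / B i) * B i := by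
              refine mul_le_mul_of_nonneg_left ?_ (le_of_lt (div_pos hζ hB))
              rw [hdi]; exact hle
          _ = ζ i := div_mul_cancel₀ _ (ne_of_gt hB)
          _ ≤ _ := by rw [hdi]; exact hin
    · have h0 : d i = 0 := by rw [hdi, hK0 i hi, sub_self]
      simp [h0]
  -- ℓ² norm ≤ sum of block norms
  have hnorm : ‖d‖ ≤ ∑ i, ‖d i‖ := by
    have h1 : ‖d‖ ^ 2 ≤ (∑ i, ‖d i‖) ^ 2 := by
      rw [PiLp.norm_sq_eq_of_L2]
      exact Finset.sum_sq_le_sq_sum_of_nonneg fun i _ => norm_nonneg _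
    have h2 := Real.sqrt_le_sqrt h1
    rwa [Real.sqrt_sq (norm_nonneg _),
      Real.sqrt_sq (Finset.sum_nonneg fun i _ => norm_nonneg _)] at h2
  calc ε * ‖d‖ ≤ ε * ∑ i, ‖d i‖ :=
        mul_le_mul_of_nonneg_left hnorm hεpos.le
    _ = ∑ i, ε * ‖d i‖ := Finset.mul_sum _ _ _
    _ ≤ ∑ i, (inner ℝ (φ i) (d i) : ℝ) := Finset.sum_le_sum fun i _ => hblock i
    _ = inner ℝ φ d := (PiLp.inner_apply φ d).symm
end
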